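/- Let p ≥ 3 be an integer, let θ be a unit vector in ℝ^p, and let μ be a probability measure on the unit sphere S^{p−1} ⊂ ℝ^p that is rotationally symmetric about θ. Then for every unit vector θ₀ ∈ ℝ^p, ∫_{S^{p−1}} (x'θ₀)² dμ(x) = e₂ (θ'θ₀)² + ((1 − e₂)/(p−1)) (1 − (θ'θ₀)²), where e₂ := ∫_{S^{p−1}} (x'θ)² dμ(x). -/

import Mathlib

open Matrix MeasureTheory

lemma inner_eq_dotProduct {p : ℕ} (u w : EuclideanSpace ℝ (Fin p)) :
    (inner ℝ u w : ℝ) = (u : Fin p → ℝ) ⬝ᵥ (w : Fin p → ℝ) := by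
  simp [PiLp.inner_apply, RCLike.inner_apply, dotProduct, mul_comm]

lemma integrable_dot_mul {p : ℕ} (μ : Measure (Fin p → ℝ)) [IsProbabilityMeasure μ]
    (hs : ∀ᵐ x ∂μ, x ⬝ᵥ x = 1) (u w : Fin p → ℝ) :
    Integrable (fun x => (x ⬝ᵥ u) * (x ⬝ᵥ w)) μ := by
  have hcont : ∀ v : Fin p → ℝ, Continuous fun x : Fin p → ℝ => x ⬝ᵥ v := by
    intro v
    exact continuous_finset_sum _ fun i _ => (continuous_apply i).mul continuous_const
  refine ⟨(((hcont u).mul (hcont w))).aestronglyMeasurable, ?_⟩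
  refine MeasureTheory.HasFiniteIntegral.of_bounded (C := (u ⬝ᵥ u + w ⬝ᵥ w)/2) ?_
  filter_upwards [hs] with x hx
  have key : ∀ v : Fin p → ℝ, (x ⬝ᵥ v)^2 ≤ v ⬝ᵥ v := by
    intro v
    have h1 := Finset.sum_mul_sq_le_sq_mul_sq Finset.univ x v
    have h2 : ∑ i, x i ^ 2 = x ⬝ᵥ x := by simp [dotProduct, sq]
    have h3 : ∑ i, v i ^ 2 = v ⬝ᵥ v := by simp [dotProduct, sq]
    calc (x ⬝ᵥ v)^2 ≤ (∑ i, x i ^2) * ∑ i, v i ^2 := h1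
      _ = v ⬝ᵥ v := by rw [h2, hx, h3, one_mul]
  have habs : |(x ⬝ᵥ u) * (x ⬝ᵥ w)| ≤ (u ⬝ᵥ u + w ⬝ᵥ w)/2 := by
    rw [abs_mul]
    nlinarith [key u, key w, sq_abs (x ⬝ᵥ u), sq_abs (x ⬝ᵥ w),
      abs_nonneg (x ⬝ᵥ u), abs_nonneg (x ⬝ᵥ w), sq_nonneg (|x ⬝ᵥ u| - |x ⬝ᵥ w|)]
  rw [Real.norm_eq_abs]; exact habs

lemma inner_eq_dotProduct' {p : ℕ} (u w : EuclideanSpace ℝ (Fin p)) :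
    (inner ℝ u w : ℝ) = (u : Fin p → ℝ) ⬝ᵥ (w : Fin p → ℝ) := by
  simp [PiLp.inner_apply, RCLike.inner_apply, dotProduct, mul_comm]


lemma exists_special_rot {p : ℕ} (b : OrthonormalBasis (Fin p) ℝ (EuclideanSpace ℝ (Fin p)))
    (i j : Fin p) (hij : i ≠ j) :
    ∃ O : Matrix (Fin p) (Fin p) ℝ,
      O ∈ Matrix.orthogonalGroup (Fin p) ℝ ∧ O.det = 1 ∧
      (∀ k : Fin p, O.mulVec (b k) =
        (if k = j then (-1:ℝ) else 1) • (b (Equiv.swap i j k) : Fin p → ℝ)) ∧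
      (∀ k : Fin p, O.transpose.mulVec (b k) =
        (if k = i then (-1:ℝ) else 1) • (b (Equiv.swap i j k) : Fin p → ℝ)) := by
  classical
  set σ : Equiv.Perm (Fin p) := Equiv.swap i j with hσ
  set d : Fin p → ℝ := fun k => if k = j then -1 else 1 with hd
  set T : Matrix (Fin p) (Fin p) ℝ := (Matrix.diagonal d).submatrix σ id with hT
  set B : Matrix (Fin p) (Fin p) ℝ := Matrix.of (fun r k => (b k : Fin p → ℝ) r) with hB
  have horth := b.orthonormal
  rw [orthonormal_iff_ite] at horth
  have hdot : ∀ k l : Fin p, (b k : Fin p → ℝ) ⬝ᵥ (b l : Fin p → ℝ) = if k = l then 1 else 0 := by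
    intro k l
    rw [← inner_eq_dotProduct']
    exact horth k l
  have hBtB : Bᵀ * B = 1 := by
    ext k l
    have h := hdot k l
    simpa [Matrix.mul_apply, Matrix.one_apply, dotProduct, B] using h
  have hBBt : B * Bᵀ = 1 := mul_eq_one_comm.mp hBtB
  have hd2 : ∀ k, d k * d k = 1 := by
    intro k; by_cases h : k = j <;> simp [hd, h]
  have hTdef : ∀ a c, T a c = if σ a = c then d (σ a) else 0 := by
    intro a c
    simp [hT, Matrix.submatrix_apply, Matrix.diagonal_apply]
  have hTTt : T * Tᵀ = 1 := by
    ext a c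
    simp only [Matrix.mul_apply, Matrix.transpose_apply, hTdef]
    rw [Finset.sum_eq_single (σ a)]
    · by_cases h : a = c
      · subst h; simp [hd2]
      · have : σ c ≠ σ a := fun hcc => h (σ.injective hcc).symm
        simp [Matrix.one_apply, h, this]
    · intro x _ hx
      simp [Ne.symm hx]
    · intro hx; exact absurd (Finset.mem_univ _) hx
  have hdetT : T.det = 1 := by
    have hσs : Equiv.Perm.sign σ = -1 := Equiv.Perm.sign_swap hij
    have hdd : (Matrix.diagonal d).det = -1 := by
      rw [Matrix.det_diagonal]
      have : ∀ k : Fin p, d k = if k = j then (-1:ℝ) else 1 := fun k => rfl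
      simp only [this]
      rw [Finset.prod_ite_eq' Finset.univ j (fun _ => (-1:ℝ))]
      simp
    rw [hT, Matrix.det_permute, hσs, hdd]
    norm_num
  have hTtT : Tᵀ * T = 1 := mul_eq_one_comm.mp hTTt
  set O : Matrix (Fin p) (Fin p) ℝ := B * T * Bᵀ with hO
  have hOt : Oᵀ = B * Tᵀ * Bᵀ := by
    rw [hO, Matrix.transpose_mul, Matrix.transpose_mul, Matrix.transpose_transpose,
      Matrix.mul_assoc]
  have hmul : O * Oᵀ = 1 := by
    rw [hOt, hO]
    calc B * T * Bᵀ * (B * Tᵀ * Bᵀ)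
        = B * T * (Bᵀ * B) * Tᵀ * Bᵀ := by simp only [Matrix.mul_assoc]
      _ = B * (T * Tᵀ) * Bᵀ := by rw [hBtB, Matrix.mul_one]; simp only [Matrix.mul_assoc]
      _ = B * Bᵀ := by rw [hTTt, Matrix.mul_one]
      _ = 1 := hBBt
  have hstar : star O = Oᵀ := by
    ext a c
    simp [Matrix.star_apply, Matrix.transpose_apply]
  have hmem : O ∈ Matrix.orthogonalGroup (Fin p) ℝ := by
    rw [Matrix.mem_orthogonalGroup_iff]
    exact hmul
  have hdetB : B.det * B.det = 1 := by
    have h := congrArg Matrix.det hBBt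
    rwa [Matrix.det_mul, Matrix.det_transpose, Matrix.det_one] at h
  have hdetO : O.det = 1 := by
    rw [hO, Matrix.det_mul, Matrix.det_mul, Matrix.det_transpose, hdetT, mul_one]
    exact hdetB
  have hBt : ∀ k : Fin p, Bᵀ.mulVec (b k) = (Pi.single k 1 : Fin p → ℝ) := by
    intro k
    ext l
    have h := hdot l k
    simp only [Matrix.mulVec, Matrix.transpose_apply, dotProduct, B, Matrix.of_apply] at *
    rw [h, Pi.single_apply]
  have hBs : ∀ (l : Fin p) (c : ℝ), B.mulVec (c • (Pi.single l 1 : Fin p → ℝ)) = c • (b l : Fin p → ℝ) := by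
    intro l c
    rw [Matrix.mulVec_smul, Matrix.mulVec_single]
    ext r
    simp [B]
  have hσσ : ∀ k, σ (σ k) = k := fun k => Equiv.swap_apply_self i j k
  have hTsingle : ∀ k : Fin p, T.mulVec ((Pi.single k 1 : Fin p → ℝ)) = d k • (Pi.single (σ k) 1 : Fin p → ℝ) := by
    intro k
    ext a
    rw [Matrix.mulVec_single]
    simp only [hTdef, Pi.smul_apply, Pi.single_apply, smul_eq_mul]
    by_cases h : a = σ k
    · subst h; simp [hσσ, hTdef]
    · have : σ a ≠ k := fun hc => h (by rw [← hc, hσσ])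
      simp [this, h, hTdef]
  have hTtsingle : ∀ k : Fin p, Tᵀ.mulVec ((Pi.single k 1 : Fin p → ℝ)) = d (σ k) • (Pi.single (σ k) 1 : Fin p → ℝ) := by
    intro k
    ext a
    rw [Matrix.mulVec_single]
    simp only [Matrix.transpose_apply, hTdef, Pi.smul_apply, Pi.single_apply, smul_eq_mul]
    by_cases h : a = σ k
    · subst h; simp [hσσ, hTdef]
    · have : σ k ≠ a := fun hc => h hc.symm
      simp [this, h, hTdef]
  refine ⟨O, hmem, hdetO, ?_, ?_⟩
  · intro k
    have : O.mulVec (b k) = B.mulVec (T.mulVec (Bᵀ.mulVec (b k))) := by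
      rw [Matrix.mulVec_mulVec, Matrix.mulVec_mulVec, hO]
    rw [this, hBt, hTsingle, hBs]
  · intro k
    have : Oᵀ.mulVec (b k) = B.mulVec (Tᵀ.mulVec (Bᵀ.mulVec (b k))) := by
      rw [Matrix.mulVec_mulVec, Matrix.mulVec_mulVec, hOt]
    rw [this, hBt, hTtsingle, hBs]
    have hcoef : d (σ k) = if k = i then (-1:ℝ) else 1 := by
      by_cases h : k = i
      · subst h; simp [hd, hσ, Equiv.swap_apply_left]
      · have : σ k ≠ j := by
          intro hc
          exact h (by rw [← hσσ k, hc, hσ, Equiv.swap_apply_right])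
        simp [hd, this, h]
    rw [hcoef]


theorem second_moment_rotationally_symmetric (p : ℕ) (hp : 3 ≤ p)
    (θ : Fin p → ℝ) (hθ : θ ⬝ᵥ θ = 1)
    (μ : Measure (Fin p → ℝ)) [IsProbabilityMeasure μ]
    (hsphere : ∀ᵐ x ∂μ, x ⬝ᵥ x = 1)
    (hrot : ∀ O : Matrix (Fin p) (Fin p) ℝ,
      O ∈ Matrix.orthogonalGroup (Fin p) ℝ → O.det = 1 → O.mulVec θ = θ →
        Measure.map (fun x => O.mulVec x) μ = μ)
    (θ₀ : Fin p → ℝ) (hθ₀ : θ₀ ⬝ᵥ θ₀ = 1) :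
    ∫ x, (x ⬝ᵥ θ₀) ^ 2 ∂μ =
      (∫ x, (x ⬝ᵥ θ) ^ 2 ∂μ) * (θ ⬝ᵥ θ₀) ^ 2 +
        ((1 - ∫ x, (x ⬝ᵥ θ) ^ 2 ∂μ) / ((p : ℝ) - 1)) * (1 - (θ ⬝ᵥ θ₀) ^ 2) := by
  classical
  have hp1 : ((p:ℝ) - 1) ≠ 0 := by
    have h3 : (3:ℝ) ≤ (p:ℝ) := by exact_mod_cast hp
    linarith
  set c : ℝ := θ ⬝ᵥ θ₀ with hc
  set e₂ : ℝ := ∫ x, (x ⬝ᵥ θ) ^ 2 ∂μ with he2def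
  set w : Fin p → ℝ := θ₀ - c • θ with hwdef
  have hθw : θ ⬝ᵥ w = 0 := by
    rw [hwdef, dotProduct_sub, dotProduct_smul, smul_eq_mul, hθ, ← hc]
    ring
  have hww : w ⬝ᵥ w = 1 - c ^ 2 := by
    rw [hwdef, dotProduct_sub, sub_dotProduct, sub_dotProduct, dotProduct_smul,
      smul_dotProduct, smul_dotProduct, dotProduct_smul, smul_eq_mul, smul_eq_mul,
      smul_eq_mul, smul_eq_mul, hθ, hθ₀, dotProduct_comm θ₀ θ, ← hc]
    ring
  have hint : ∀ u v : Fin p → ℝ, Integrable (fun x => (x ⬝ᵥ u) * (x ⬝ᵥ v)) μ :=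
    fun u v => integrable_dot_mul μ hsphere u v
  set I : (Fin p → ℝ) → (Fin p → ℝ) → ℝ := fun u v => ∫ x, (x ⬝ᵥ u) * (x ⬝ᵥ v) ∂μ with hIdef
  have hIsmul : ∀ (s t : ℝ) (u v : Fin p → ℝ), I (s • u) (t • v) = (s * t) * I u v := by
    intro s t u v
    simp only [hIdef]
    have h : ∀ x : Fin p → ℝ, (x ⬝ᵥ (s • u)) * (x ⬝ᵥ (t • v))
        = (s * t) * ((x ⬝ᵥ u) * (x ⬝ᵥ v)) := by
      intro x
      rw [dotProduct_smul, dotProduct_smul, smul_eq_mul, smul_eq_mul]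
      ring
    simp only [h]
    rw [integral_const_mul]
  have he2 : e₂ = I θ θ := by
    rw [he2def]
    simp only [hIdef, pow_two]
  have hsplit : (∫ x, (x ⬝ᵥ θ₀) ^ 2 ∂μ) = c ^ 2 * I θ θ + (2 * c) * I θ w + I w w := by
    have hpt : ∀ x : Fin p → ℝ, (x ⬝ᵥ θ₀) ^ 2
        = c ^ 2 * ((x ⬝ᵥ θ) * (x ⬝ᵥ θ))
          + ((2 * c) * ((x ⬝ᵥ θ) * (x ⬝ᵥ w)) + (x ⬝ᵥ w) * (x ⬝ᵥ w)) := by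
      intro x
      have hx : x ⬝ᵥ θ₀ = c * (x ⬝ᵥ θ) + x ⬝ᵥ w := by
        rw [hwdef, dotProduct_sub, dotProduct_smul, smul_eq_mul]
        ring
      rw [hx]; ring
    have int1 : Integrable (fun x : Fin p → ℝ => c ^ 2 * ((x ⬝ᵥ θ) * (x ⬝ᵥ θ))) μ :=
      (hint θ θ).const_mul _
    have int2 : Integrable (fun x : Fin p → ℝ => (2 * c) * ((x ⬝ᵥ θ) * (x ⬝ᵥ w))) μ :=
      (hint θ w).const_mul _
    have int3 : Integrable (fun x : Fin p → ℝ => (x ⬝ᵥ w) * (x ⬝ᵥ w)) μ := hint w w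
    have int23 : Integrable
        (fun x : Fin p → ℝ => (2 * c) * ((x ⬝ᵥ θ) * (x ⬝ᵥ w)) + (x ⬝ᵥ w) * (x ⬝ᵥ w)) μ :=
      int2.add int3
    rw [integral_congr_ae (Filter.Eventually.of_forall hpt)]
    rw [integral_add int1 int23, integral_add int2 int3, integral_const_mul, integral_const_mul]
    simp only [hIdef]
    ring
  suffices h : I θ w = 0 ∧ I w w = (1 - e₂) / ((p:ℝ) - 1) * (1 - c ^ 2) by
    rw [hsplit, h.1, h.2, ← he2]
    ring
  by_cases hw0 : w ⬝ᵥ w = 0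
  · have hwz : w = 0 := dotProduct_self_eq_zero.mp hw0
    have h1c : 1 - c ^ 2 = 0 := by rw [← hww, hw0]
    constructor
    · simp [hIdef, hwz]
    · simp [hIdef, hwz, h1c]
  · have hwwpos : 0 < w ⬝ᵥ w :=
      lt_of_le_of_ne (Finset.sum_nonneg fun i _ => mul_self_nonneg _) (Ne.symm hw0)
    set r : ℝ := Real.sqrt (w ⬝ᵥ w) with hrdef
    have hr0 : 0 < r := Real.sqrt_pos.mpr hwwpos
    have hr2 : r * r = w ⬝ᵥ w := Real.mul_self_sqrt (le_of_lt hwwpos)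
    set v : Fin p → ℝ := r⁻¹ • w with hvdef
    have hwv : w = r • v := by
      rw [hvdef, smul_smul, mul_inv_cancel₀ (ne_of_gt hr0), one_smul]
    have hvv : v ⬝ᵥ v = 1 := by
      have h1 : v ⬝ᵥ v = r⁻¹ * (r⁻¹ * (w ⬝ᵥ w)) := by
        rw [hvdef, dotProduct_smul, smul_dotProduct, smul_eq_mul, smul_eq_mul]
      rw [h1, ← hr2]
      field_simp
    have hθv : θ ⬝ᵥ v = 0 := by
      rw [hvdef, dotProduct_smul, hθw, smul_eq_mul, mul_zero]
    have hvθ : v ⬝ᵥ θ = 0 := by rw [dotProduct_comm, hθv]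
    obtain ⟨i0, i1, i2, h01, h02, h12⟩ :
        ∃ i0 i1 i2 : Fin p, i0 ≠ i1 ∧ i0 ≠ i2 ∧ i1 ≠ i2 :=
      ⟨⟨0, by omega⟩, ⟨1, by omega⟩, ⟨2, by omega⟩, by simp, by simp, by simp⟩
    have hfr : Module.finrank ℝ (EuclideanSpace ℝ (Fin p)) = Fintype.card (Fin p) := by
      simp [finrank_euclideanSpace]
    set f : Fin p → EuclideanSpace ℝ (Fin p) :=
      fun k => if k = i0 then (WithLp.toLp 2 θ : EuclideanSpace ℝ (Fin p)) else (WithLp.toLp 2 v : EuclideanSpace ℝ (Fin p))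
      with hfdef
    have hon : Orthonormal ℝ (({i0, i1} : Set (Fin p)).restrict f) := by
      rw [orthonormal_iff_ite]
      rintro ⟨a, ha⟩ ⟨a', ha'⟩
      simp only [Set.restrict_apply, Subtype.mk_eq_mk]
      simp only [Set.mem_insert_iff, Set.mem_singleton_iff] at ha ha'
      rcases ha with rfl | rfl <;> rcases ha' with rfl | rfl <;>
        rw [inner_eq_dotProduct'] <;>
        dsimp only [Set.restrict] <;>
        simp [hfdef, h01, Ne.symm h01, hθ, hvv, hθv, hvθ]
    obtain ⟨b, hb⟩ := hon.exists_orthonormalBasis_extension_of_card_eq hfr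
    have hb0 : (b i0 : Fin p → ℝ) = θ := by
      have h := hb i0 (by simp)
      rw [h]
      simp [hfdef]
    have hb1 : (b i1 : Fin p → ℝ) = v := by
      have h := hb i1 (by simp)
      rw [h]
      simp [hfdef, Ne.symm h01]
    have hKey : ∀ O : Matrix (Fin p) (Fin p) ℝ, O ∈ Matrix.orthogonalGroup (Fin p) ℝ →
        O.det = 1 → O.mulVec θ = θ →
        ∀ u u' : Fin p → ℝ, I u u' = I (Oᵀ.mulVec u) (Oᵀ.mulVec u') := by
      intro O hmem hdet hfix u u'
      have hμO := hrot O hmem hdet hfix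
      have hOcont : Continuous fun x : Fin p → ℝ => O.mulVec x := by
        have hlin : (fun x : Fin p → ℝ => O.mulVec x) = O.mulVecLin := by
          funext x; rw [Matrix.mulVecLin_apply]
        rw [hlin]
        exact LinearMap.continuous_of_finiteDimensional _
      have hdotc : ∀ z : Fin p → ℝ, Continuous fun x : Fin p → ℝ => x ⬝ᵥ z := fun z =>
        continuous_finset_sum _ fun i _ => (continuous_apply i).mul continuous_const
      have hgc : Continuous fun x : Fin p → ℝ => (x ⬝ᵥ u) * (x ⬝ᵥ u') :=
        (hdotc u).mul (hdotc u')
      have hdotO : ∀ (z x : Fin p → ℝ), (O.mulVec x) ⬝ᵥ z = x ⬝ᵥ (Oᵀ.mulVec z) := by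
        intro z x
        calc (O.mulVec x) ⬝ᵥ z = z ⬝ᵥ (O.mulVec x) := dotProduct_comm _ _
          _ = (z ᵥ* O) ⬝ᵥ x := Matrix.dotProduct_mulVec z O x
          _ = x ⬝ᵥ (z ᵥ* O) := dotProduct_comm _ _
          _ = x ⬝ᵥ (Oᵀ.mulVec z) := by rw [Matrix.mulVec_transpose]
      calc I u u' = ∫ x, (x ⬝ᵥ u) * (x ⬝ᵥ u') ∂μ := by simp only [hIdef]
        _ = ∫ x, (x ⬝ᵥ u) * (x ⬝ᵥ u') ∂(Measure.map (fun x => O.mulVec x) μ) := by rw [hμO]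
        _ = ∫ x, ((O.mulVec x) ⬝ᵥ u) * ((O.mulVec x) ⬝ᵥ u') ∂μ :=
            integral_map hOcont.aemeasurable hgc.aestronglyMeasurable
        _ = ∫ x, (x ⬝ᵥ (Oᵀ.mulVec u)) * (x ⬝ᵥ (Oᵀ.mulVec u')) ∂μ := by
            congr 1
            funext x
            rw [hdotO u, hdotO u']
        _ = I (Oᵀ.mulVec u) (Oᵀ.mulVec u') := by simp only [hIdef]
    have hswap : ∀ k : Fin p, k ≠ i0 → I (b k) (b k) = I (b i1) (b i1) := by
      intro k hk
      by_cases hk1 : k = i1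
      · rw [hk1]
      · obtain ⟨O, hm, hdet, hact, hactT⟩ := exists_special_rot b k i1 hk1
        have hfix : O.mulVec θ = θ := by
          rw [← hb0, hact i0, if_neg h01, Equiv.swap_apply_of_ne_of_ne (Ne.symm hk) h01,
            one_smul]
        have h := hKey O hm hdet hfix (b k) (b k)
        rw [hactT k, if_pos rfl, Equiv.swap_apply_left, hIsmul] at h
        simpa using h
    have hzero : I (b i0) (b i1) = 0 := by
      obtain ⟨O, hm, hdet, hact, hactT⟩ := exists_special_rot b i1 i2 h12
      have hfix : O.mulVec θ = θ := by
        rw [← hb0, hact i0, if_neg h02, Equiv.swap_apply_of_ne_of_ne h01 h02, one_smul]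
      set O2 := O * O with hO2
      have hm2 : O2 ∈ Matrix.orthogonalGroup (Fin p) ℝ := mul_mem hm hm
      have hdet2 : O2.det = 1 := by rw [hO2, Matrix.det_mul, hdet, mul_one]
      have hfix2 : O2.mulVec θ = θ := by
        rw [hO2, ← Matrix.mulVec_mulVec, hfix, hfix]
      have h := hKey O2 hm2 hdet2 hfix2 (b i0) (b i1)
      have ht0 : O2ᵀ.mulVec (b i0) = (b i0 : Fin p → ℝ) := by
        rw [hO2, Matrix.transpose_mul, ← Matrix.mulVec_mulVec, hactT i0, if_neg h01,
          Equiv.swap_apply_of_ne_of_ne h01 h02, one_smul, hactT i0, if_neg h01,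
          Equiv.swap_apply_of_ne_of_ne h01 h02, one_smul]
      have ht1 : O2ᵀ.mulVec (b i1) = (-1 : ℝ) • (b i1 : Fin p → ℝ) := by
        rw [hO2, Matrix.transpose_mul, ← Matrix.mulVec_mulVec, hactT i1, if_pos rfl,
          Equiv.swap_apply_left, Matrix.mulVec_smul, hactT i2, if_neg (Ne.symm h12),
          Equiv.swap_apply_right, one_smul]
      rw [ht0, ht1] at h
      have h2 := hIsmul 1 (-1) (b i0) (b i1)
      rw [one_smul] at h2
      rw [h2] at h
      linarith
    have hsum : ∑ k : Fin p, I (b k) (b k) = 1 := by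
      have hpt : ∀ᵐ x ∂μ,
          (∑ k : Fin p, (x ⬝ᵥ (b k : Fin p → ℝ)) * (x ⬝ᵥ (b k : Fin p → ℝ))) = 1 := by
        filter_upwards [hsphere] with x hx
        have hpar := b.sum_inner_mul_inner (WithLp.toLp 2 x) (WithLp.toLp 2 x)
        simp only [inner_eq_dotProduct', WithLp.ofLp_toLp] at hpar
        rw [hx] at hpar
        calc ∑ k : Fin p, (x ⬝ᵥ (b k : Fin p → ℝ)) * (x ⬝ᵥ (b k : Fin p → ℝ))
            = ∑ k : Fin p, (x ⬝ᵥ (b k : Fin p → ℝ)) * ((b k : Fin p → ℝ) ⬝ᵥ x) := by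
              refine Finset.sum_congr rfl fun k _ => ?_
              rw [dotProduct_comm (b k : Fin p → ℝ) x]
          _ = 1 := hpar
      calc ∑ k : Fin p, I (b k) (b k)
          = ∫ x, (∑ k : Fin p, (x ⬝ᵥ (b k : Fin p → ℝ)) * (x ⬝ᵥ (b k : Fin p → ℝ))) ∂μ := by
            simp only [hIdef]
            rw [integral_finset_sum _ (fun k _ => hint _ _)]
        _ = ∫ _x, (1:ℝ) ∂μ := integral_congr_ae hpt
        _ = 1 := by simp
    have hsplit2 : ∑ k : Fin p, I (b k) (b k)
        = I (b i0) (b i0) + ((p:ℝ) - 1) * I (b i1) (b i1) := by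
      rw [← Finset.add_sum_erase Finset.univ _ (Finset.mem_univ i0)]
      congr 1
      rw [Finset.sum_congr rfl (fun k hk => hswap k (Finset.ne_of_mem_erase hk)),
        Finset.sum_const, Finset.card_erase_of_mem (Finset.mem_univ i0), Finset.card_univ,
        Fintype.card_fin, nsmul_eq_mul]
      congr 1
      rw [Nat.cast_sub (by omega : 1 ≤ p)]
      norm_num
    have hq : I (b i1) (b i1) = (1 - e₂) / ((p:ℝ) - 1) := by
      have h1 : I (b i0) (b i0) = e₂ := by rw [hb0]; exact he2.symm
      have hs := hsum
      rw [hsplit2, h1] at hs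
      field_simp
      linarith
    constructor
    · have hth : I θ w = r * I θ v := by
        have h := hIsmul 1 r θ v
        rw [one_smul, ← hwv] at h
        rw [h]; ring
      rw [hth, ← hb0, ← hb1, hzero, mul_zero]
    · have h := hIsmul r r v v
      rw [← hwv] at h
      rw [h, hr2, hww, ← hb1, hq]
      ring
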